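/- Uniqueness part of Theorem 3.3/EvenFromPtoP: let n ∈ ℕ with n ≥ 2, let N ∈ ℕ with N ≥ 1, let p ∈ ℕ with p ≤ n−1, and let λ ∈ ℂ. Suppose P, Q, R ∈ ℂ[t] satisfy deg P ≤ N, deg Q ≤ N−1, deg R ≤ N−1 and the six identities (with ' the formal polynomial derivative): (1) 2t(t+1)P'' + (3−4N)tP' + (2λ+n−4N+1)P' + N(2N−1)P = 0; (2) 2P' + (2N−1)Q − 2tQ' + 2tR' + (λ+n−p−2N+1)R = 0; (3) −2P' + (λ+p−2N)R = 0; (4) 2tP' − 2N·P + (λ+p−2N)Q = 0; (5) 2t(t+1)Q'' + (5−4N)tQ' + (2λ+n−4N+3)Q' + (N−1)(2N−1)Q + 2tR' − (2N−2)R = 0; (6) 2t(t+1)R'' + (7−4N)tR' + (2λ+n−4N+3)R' + (N−1)(2N−3)R = 0. Then there exists c ∈ ℂ such that P(t) = c·(λ+p−2N)·Σ_{j=0}^{N} a_j^{(N)}(λ) t^j, Q(t) = −c·2N·(2λ+n−2N−1)·Σ_{j=0}^{N−1} b_j^{(N−1)}(λ−1) t^j, and R(t) = c·2N·Σ_{j=0}^{N−1}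 a_j^{(N−1)}(λ−1) t^j. -/

import Mathlib

open Finset Polynomial

noncomputable def aC (n N j : ℕ) (l : ℂ) : ℂ :=
  (-2 : ℂ) ^ (N - j) *
    ((N.factorial : ℂ) / ((j.factorial : ℂ) * ((2 * N - 2 * j).factorial : ℂ))) *
    ∏ k ∈ Finset.Ico j N, (2 * l - 4 * (N : ℂ) + 2 * (k : ℂ) + (n : ℂ) + 1)

noncomputable def bC (n N j : ℕ) (l : ℂ) : ℂ :=
  (-2 : ℂ) ^ (N - j) *
    ((N.factorial : ℂ) / ((j.factorial : ℂ) * ((2 * N - 2 * j + 1).factorial : ℂ))) *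
    ∏ k ∈ Finset.Ico j N, (2 * l - 4 * (N : ℂ) + 2 * (k : ℂ) + (n : ℂ) - 1)

noncomputable def bCZ (n M : ℕ) (j : ℤ) (l : ℂ) : ℂ :=
  if 0 ≤ j ∧ j ≤ (M : ℤ) then bC n M j.toNat l else 0

noncomputable def alphaC (n N i : ℕ) (l : ℂ) : ℂ :=
  (-1 : ℂ) ^ i * 2 ^ N * ((N.factorial : ℂ) / ((2 * N).factorial : ℂ)) * (N.choose i : ℂ) *
    (∏ k ∈ Finset.Icc (i + 1) N, (2 * l + (n : ℂ) - 2 * (k : ℂ))) *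
    ∏ k ∈ Finset.Icc 1 i, (2 * l + (n : ℂ) - 2 * (k : ℂ) - 2 * (N : ℂ) + 1)

noncomputable def betaC (n N i : ℕ) (l : ℂ) : ℂ :=
  (-1 : ℂ) ^ i * 2 ^ N * ((N.factorial : ℂ) / ((2 * N + 1).factorial : ℂ)) * (N.choose i : ℂ) *
    (∏ k ∈ Finset.Icc (i + 1) N, (2 * l + (n : ℂ) - 2 * (k : ℂ))) *
    ∏ k ∈ Finset.Icc 1 i, (2 * l + (n : ℂ) - 2 * (k : ℂ) - 2 * (N : ℂ) - 1)

noncomputable def gammaC (n N i : ℕ) (l p : ℂ) : ℂ :=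
  (-1 : ℂ) ^ i * 2 ^ N *
    ((N.factorial : ℂ) / (((N : ℂ) + 1) * ((2 * N + 1).factorial : ℂ))) *
    ((N + 1).choose i : ℂ) *
    ((l + p - 2 * (N : ℂ) - 1) * ((N : ℂ) + 1) * (2 * l + (n : ℂ) - 2 * (i : ℂ)) +
      (l + (n : ℂ) - p) * (2 * (N : ℂ) + 1) * ((N : ℂ) - (i : ℂ) + 1)) *
    (∏ k ∈ Finset.Icc (i + 1) N, (2 * l + (n : ℂ) - 2 * (k : ℂ))) *
    ∏ k ∈ Finset.Icc 1 (i - 1), (2 * l + (n : ℂ) - 2 * (k : ℂ) - 2 * (N : ℂ) - 1)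

noncomputable def poch (a : ℂ) (l : ℕ) : ℂ :=
  ∏ m ∈ Finset.range l, (a + (m : ℂ))

lemma hodd (x y : ℕ) : (2*(x:ℂ) - 2*(y:ℂ) + 1) ≠ 0 := by
  intro h
  have h2 : ((2*x+1 : ℤ):ℂ) = ((2*y : ℤ):ℂ) := by push_cast; linear_combination h
  have := Int.cast_injective h2
  omega

lemma ode_rec (S : ℂ[X]) (a b c : ℂ)
    (h : C 2 * X * (X+1) * derivative (derivative S) + C a * X * derivative S
       + C b * derivative S + C c * S = 0) (m : ℕ) :
    ((m:ℂ)+1) * (2*(m:ℂ) + b) * S.coeff (m+1)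
      + (2*(m:ℂ)*((m:ℂ)-1) + a*(m:ℂ) + c) * S.coeff m = 0 := by
  have h' : C 2 * (X * (X * derivative (derivative S))) + C 2 * (X * derivative (derivative S))
      + C a * (X * derivative S) + C b * derivative S + C c * S = 0 := by
    linear_combination h
  have hc := congrArg (fun q => Polynomial.coeff q m) h'
  simp only [coeff_add, coeff_C_mul, coeff_zero] at hc
  match m with
  | 0 =>
    simp only [mul_coeff_zero, coeff_X_zero, zero_mul, mul_zero, coeff_derivative,
      Nat.cast_zero] at hc ⊢
    push_cast at hc ⊢
    linear_combination hc
  | 1 =>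
    have e1 : (X * (X * derivative (derivative S))).coeff 1 = 0 := by
      rw [coeff_X_mul]; simp
    rw [e1] at hc
    simp only [coeff_X_mul, coeff_derivative] at hc
    push_cast at hc ⊢
    linear_combination hc
  | (k+2) =>
    have e1 : (X * (X * derivative (derivative S))).coeff (k+2) = (derivative (derivative S)).coeff k := by
      rw [coeff_X_mul, coeff_X_mul]
    rw [e1] at hc
    simp only [coeff_X_mul, coeff_derivative] at hc
    have i1 : k + 1 + 1 = k + 2 := rfl
    have i2 : k + 1 + 1 + 1 = k + 2 + 1 := rfl
    rw [i1, i2] at hc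
    push_cast at hc ⊢
    linear_combination hc

lemma aC_top (n M : ℕ) (l : ℂ) : aC n M M l = 1 := by
  unfold aC
  simp [Nat.sub_self, div_self (Nat.cast_ne_zero.mpr (Nat.factorial_ne_zero M) : (M.factorial:ℂ) ≠ 0)]

lemma aC_rec (n M m : ℕ) (l : ℂ) (hm : m < M) :
    ((m:ℂ)+1) * (2*l + (n:ℂ) - 4*(M:ℂ) + 2*(m:ℂ) + 1) * aC n M (m+1) l
      + (2*(m:ℂ) - 2*(M:ℂ) + 1) * ((m:ℂ) - (M:ℂ)) * aC n M m l = 0 := by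
  obtain ⟨e, rfl⟩ : ∃ e, M = m + 1 + e := ⟨M - (m+1), by omega⟩
  unfold aC
  rw [Finset.prod_eq_prod_Ico_succ_bot hm]
  have e1 : 2 * (m+1+e) - 2 * m = 2*e + 2 := by omega
  have e2 : 2 * (m+1+e) - 2 * (m+1) = 2*e := by omega
  have e3 : m + 1 + e - m = e + 1 := by omega
  have e4 : m + 1 + e - (m+1) = e := by omega
  rw [e1, e2, e3, e4]
  have f1 : ((2*e+2).factorial : ℂ) = (2*(e:ℂ)+2) * (2*(e:ℂ)+1) * ((2*e).factorial : ℂ) := by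
    show (((2*e+1)+1).factorial : ℂ) = _
    rw [Nat.factorial_succ, Nat.factorial_succ]
    push_cast; ring
  have f2 : ((m+1).factorial : ℂ) = ((m:ℂ)+1) * (m.factorial : ℂ) := by
    rw [Nat.factorial_succ]; push_cast; ring
  rw [f1, f2]
  have hm0 : (m.factorial : ℂ) ≠ 0 := Nat.cast_ne_zero.mpr (Nat.factorial_ne_zero m)
  have he0 : ((2*e).factorial : ℂ) ≠ 0 := Nat.cast_ne_zero.mpr (Nat.factorial_ne_zero _)
  have hm1 : ((m:ℂ)+1) ≠ 0 := by
    intro h; have : ((m+1:ℕ):ℂ) = 0 := by push_cast; linear_combination h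
    exact (Nat.cast_ne_zero.mpr (Nat.succ_ne_zero m)) this
  have h2e1 : (2*(e:ℂ)+1) ≠ 0 := by
    intro h; have : ((2*e+1:ℕ):ℂ) = 0 := by push_cast; linear_combination h
    exact (Nat.cast_ne_zero.mpr (by omega)) this
  have h2e2 : (2*(e:ℂ)+2) ≠ 0 := by
    intro h; have : ((2*e+2:ℕ):ℂ) = 0 := by push_cast; linear_combination h
    exact (Nat.cast_ne_zero.mpr (by omega)) this
  push_cast
  field_simp
  ring

lemma down (M : ℕ) (s t num den : ℕ → ℂ)
    (hs : ∀ m, m < M → num m * s (m+1) + den m * s m = 0)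
    (ht : ∀ m, m < M → num m * t (m+1) + den m * t m = 0)
    (hden : ∀ m, m < M → den m ≠ 0) (htop : t M = 1) :
    ∀ j, j ≤ M → s j = s M * t j := by
  suffices H : ∀ d j, j + d = M → s j = s M * t j by
    intro j hj; exact H (M - j) j (by omega)
  intro d
  induction d with
  | zero =>
    intro j hj
    have : j = M := by omega
    subst this
    rw [htop]; ring
  | succ d ih =>
    intro j hj
    have hjM : j < M := by omega
    have h1 := hs j hjM
    have h2 := ht j hjM
    have h3 := ih (j+1) (by omega)
    apply mul_left_cancel₀ (hden j hjM)
    linear_combination h1 - s M * h2 - num j * h3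

lemma coeff_formula (n M : ℕ) (l : ℂ) (S : ℂ[X]) (hd : S.natDegree ≤ M)
    (hrec : ∀ m : ℕ, ((m:ℂ)+1) * (2*l + (n:ℂ) - 4*(M:ℂ) + 2*(m:ℂ) + 1) * S.coeff (m+1)
      + (2*(m:ℂ) - 2*(M:ℂ) + 1) * ((m:ℂ) - (M:ℂ)) * S.coeff m = 0) :
    ∀ j, S.coeff j = S.coeff M * (if j ≤ M then aC n M j l else 0) := by
  intro j
  by_cases hj : j ≤ M
  · rw [if_pos hj]
    refine down M S.coeff (fun j => aC n M j l)
      (fun m => ((m:ℂ)+1) * (2*l + (n:ℂ) - 4*(M:ℂ) + 2*(m:ℂ) + 1))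
      (fun m => (2*(m:ℂ) - 2*(M:ℂ) + 1) * ((m:ℂ) - (M:ℂ)))
      (fun m _ => hrec m) (fun m hm => aC_rec n M m l hm) (fun m hm => ?_)
      (aC_top n M l) j hj
    refine mul_ne_zero (hodd m M) (sub_ne_zero.mpr ?_)
    exact fun h => (by omega : m ≠ M) (Nat.cast_injective h)
  · rw [if_neg hj, mul_zero]
    exact coeff_eq_zero_of_natDegree_lt (lt_of_le_of_lt hd (by omega))

lemma target_coeff (c k : ℂ) (m : ℕ) (f : ℕ → ℂ) (i : ℕ) :
    (C c * (C k * ∑ j ∈ Finset.range m, C (f j) * X^j)).coeff i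
      = c * k * (if i < m then f i else 0) := by
  rw [coeff_C_mul, coeff_C_mul, finset_sum_coeff]
  simp only [coeff_C_mul, coeff_X_pow]
  rw [Finset.sum_congr rfl (fun j _ => by rw [mul_ite, mul_one, mul_zero])]
  rw [Finset.sum_ite_eq (Finset.range m) i f]
  simp [Finset.mem_range, mul_assoc]

lemma aC_deriv (n M j : ℕ) (l : ℂ) (hj : j ≤ M) :
    ((j:ℂ)+1) * aC n (M+1) (j+1) l = ((M:ℂ)+1) * aC n M j (l-1) := by
  obtain ⟨e, rfl⟩ : ∃ e, M = j + e := ⟨M - j, by omega⟩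
  unfold aC
  have e2 : 2 * (j + e + 1) - 2 * (j + 1) = 2 * e := by omega
  have e3 : j + e + 1 - (j + 1) = e := by omega
  have e4 : 2 * (j + e) - 2 * j = 2 * e := by omega
  have e5 : j + e - j = e := by omega
  rw [e2, e3, e4, e5]
  have hprod : (∏ k ∈ Finset.Ico (j+1) (j+e+1), (2 * l - 4 * ((j+e+1 : ℕ) : ℂ) + 2 * (k : ℂ) + (n : ℂ) + 1))
      = ∏ k ∈ Finset.Ico j (j+e), (2 * (l-1) - 4 * ((j+e : ℕ) : ℂ) + 2 * (k : ℂ) + (n : ℂ) + 1) := by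
    rw [Finset.prod_Ico_eq_prod_range, Finset.prod_Ico_eq_prod_range]
    have : j + e + 1 - (j + 1) = j + e - j := by omega
    rw [this]
    refine Finset.prod_congr rfl fun i _ => ?_
    push_cast; ring
  rw [hprod]
  have f2 : ((j+1).factorial : ℂ) = ((j:ℂ)+1) * (j.factorial : ℂ) := by
    rw [Nat.factorial_succ]; push_cast; ring
  have f3 : ((j+e+1).factorial : ℂ) = ((j:ℂ)+(e:ℂ)+1) * ((j+e).factorial : ℂ) := by
    rw [Nat.factorial_succ]; push_cast; ring
  rw [f2, f3]
  have hj0 : (j.factorial : ℂ) ≠ 0 := Nat.cast_ne_zero.mpr (Nat.factorial_ne_zero j)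
  have hj1 : ((j:ℂ)+1) ≠ 0 := by
    intro h; have : ((j+1:ℕ):ℂ) = 0 := by push_cast; linear_combination h
    exact (Nat.cast_ne_zero.mpr (Nat.succ_ne_zero j)) this
  have he0 : (((2*e).factorial : ℕ) : ℂ) ≠ 0 := Nat.cast_ne_zero.mpr (Nat.factorial_ne_zero _)
  push_cast
  field_simp

lemma bC_aC (n M j : ℕ) (l : ℂ) (hj : j ≤ M) :
    (2*(M:ℂ) - 2*(j:ℂ) + 1) * (2*l + (n:ℂ) - 2*(M:ℂ) - 1) * bC n M j l
      = (2*l - 4*(M:ℂ) + 2*(j:ℂ) + (n:ℂ) - 1) * aC n M j l := by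
  obtain ⟨e, rfl⟩ : ∃ e, M = j + e := ⟨M - j, by omega⟩
  unfold aC bC
  have e4 : 2 * (j + e) - 2 * j = 2 * e := by omega
  have e5 : j + e - j = e := by omega
  rw [e4, e5]
  have hprod : (∏ k ∈ Finset.Ico j (j+e), (2 * l - 4 * ((j+e : ℕ) : ℂ) + 2 * (k : ℂ) + (n : ℂ) - 1))
        * (2 * l - 4 * ((j+e:ℕ):ℂ) + 2 * ((j+e:ℕ):ℂ) + (n:ℂ) - 1)
      = (2 * l - 4 * ((j+e:ℕ):ℂ) + 2 * ((j:ℕ):ℂ) + (n:ℂ) - 1)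
        * ∏ k ∈ Finset.Ico j (j+e), (2 * l - 4 * ((j+e : ℕ) : ℂ) + 2 * (k : ℂ) + (n : ℂ) + 1) := by
    have lhs : (∏ k ∈ Finset.Ico j (j+e+1), (2 * l - 4 * ((j+e : ℕ) : ℂ) + 2 * (k : ℂ) + (n : ℂ) - 1))
        = (∏ k ∈ Finset.Ico j (j+e), (2 * l - 4 * ((j+e : ℕ) : ℂ) + 2 * (k : ℂ) + (n : ℂ) - 1))
          * (2 * l - 4 * ((j+e:ℕ):ℂ) + 2 * ((j+e:ℕ):ℂ) + (n:ℂ) - 1) := by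
      rw [Finset.prod_Ico_succ_top (by omega)]
    have rhs : (∏ k ∈ Finset.Ico j (j+e+1), (2 * l - 4 * ((j+e : ℕ) : ℂ) + 2 * (k : ℂ) + (n : ℂ) - 1))
        = (2 * l - 4 * ((j+e:ℕ):ℂ) + 2 * ((j:ℕ):ℂ) + (n:ℂ) - 1)
          * ∏ k ∈ Finset.Ico j (j+e), (2 * l - 4 * ((j+e : ℕ) : ℂ) + 2 * (k : ℂ) + (n : ℂ) + 1) := by
      rw [Finset.prod_eq_prod_Ico_succ_bot (by omega : j < j+e+1)]
      congr 1
      rw [Finset.prod_Ico_eq_prod_range, Finset.prod_Ico_eq_prod_range]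
      have : j + e + 1 - (j + 1) = j + e - j := by omega
      rw [this]
      refine Finset.prod_congr rfl fun i _ => ?_
      push_cast; ring
    rw [← lhs, rhs]
  have f1 : ((2*e+1).factorial : ℂ) = (2*(e:ℂ)+1) * ((2*e).factorial : ℂ) := by
    rw [Nat.factorial_succ]; push_cast; ring
  rw [f1]
  have hj0 : (j.factorial : ℂ) ≠ 0 := Nat.cast_ne_zero.mpr (Nat.factorial_ne_zero j)
  have he0 : (((2*e).factorial : ℕ) : ℂ) ≠ 0 := Nat.cast_ne_zero.mpr (Nat.factorial_ne_zero _)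
  have hf0 : (((j+e).factorial : ℕ) : ℂ) ≠ 0 := Nat.cast_ne_zero.mpr (Nat.factorial_ne_zero _)
  have h2e1 : (2*(e:ℂ)+1) ≠ 0 := by
    intro h; have : ((2*e+1:ℕ):ℂ) = 0 := by push_cast; linear_combination h
    exact (Nat.cast_ne_zero.mpr (by omega)) this
  push_cast at hprod ⊢
  set u := ∏ x ∈ Finset.Ico j (j+e), (2 * l - 4 * ((j:ℂ) + (e:ℂ)) + 2 * (x : ℂ) + (n : ℂ) - 1) with hu
  set v := ∏ x ∈ Finset.Ico j (j+e), (2 * l - 4 * ((j:ℂ) + (e:ℂ)) + 2 * (x : ℂ) + (n : ℂ) + 1) with hv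
  field_simp
  linear_combination (2*(e:ℂ)+1) * hprod

theorem even_singular_vector_system_uniqueness (n : ℕ) (hn : 2 ≤ n) (N : ℕ) (hN : 1 ≤ N)
    (p : ℕ) (hp : p ≤ n - 1) (l : ℂ) (P Q R : Polynomial ℂ)
    (hdP : P.natDegree ≤ N) (hdQ : Q.natDegree ≤ N - 1) (hdR : R.natDegree ≤ N - 1)
    (h1 : C 2 * X * (X + 1) * derivative (derivative P) + C (3 - 4 * (N : ℂ)) * X * derivative P
          + C (2 * l + (n : ℂ) - 4 * (N : ℂ) + 1) * derivative P
          + C ((N : ℂ) * (2 * (N : ℂ) - 1)) * P = 0)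
    (h2 : C 2 * derivative P + C (2 * (N : ℂ) - 1) * Q - C 2 * X * derivative Q
          + C 2 * X * derivative R + C (l + (n : ℂ) - (p : ℂ) - 2 * (N : ℂ) + 1) * R = 0)
    (h3 : -(C 2 * derivative P) + C (l + (p : ℂ) - 2 * (N : ℂ)) * R = 0)
    (h4 : C 2 * X * derivative P - C (2 * (N : ℂ)) * P
          + C (l + (p : ℂ) - 2 * (N : ℂ)) * Q = 0)
    (h5 : C 2 * X * (X + 1) * derivative (derivative Q) + C (5 - 4 * (N : ℂ)) * X * derivative Q
          + C (2 * l + (n : ℂ) - 4 * (N : ℂ) + 3) * derivative Q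
          + C (((N : ℂ) - 1) * (2 * (N : ℂ) - 1)) * Q
          + C 2 * X * derivative R - C (2 * (N : ℂ) - 2) * R = 0)
    (h6 : C 2 * X * (X + 1) * derivative (derivative R) + C (7 - 4 * (N : ℂ)) * X * derivative R
          + C (2 * l + (n : ℂ) - 4 * (N : ℂ) + 3) * derivative R
          + C (((N : ℂ) - 1) * (2 * (N : ℂ) - 3)) * R = 0) :
    ∃ c : ℂ,
      P = C c * (C (l + (p : ℂ) - 2 * (N : ℂ)) *
            ∑ j ∈ Finset.range (N + 1), C (aC n N j l) * X ^ j) ∧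
      Q = C c * (C (-(2 * (N : ℂ)) * (2 * l + (n : ℂ) - 2 * (N : ℂ) - 1)) *
            ∑ j ∈ Finset.range N, C (bC n (N - 1) j (l - 1)) * X ^ j) ∧
      R = C c * (C (2 * (N : ℂ)) *
            ∑ j ∈ Finset.range N, C (aC n (N - 1) j (l - 1)) * X ^ j) := by
  
  obtain ⟨M, rfl⟩ : ∃ M, N = M + 1 := ⟨N - 1, by omega⟩
  simp only [Nat.add_sub_cancel] at hdQ hdR ⊢
  -- coefficient recurrence for P from (1)
  have hrecP : ∀ m : ℕ, ((m:ℂ)+1) * (2*l + (n:ℂ) - 4*(((M+1):ℕ):ℂ) + 2*(m:ℂ) + 1) * P.coeff (m+1)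
      + (2*(m:ℂ) - 2*(((M+1):ℕ):ℂ) + 1) * ((m:ℂ) - (((M+1):ℕ):ℂ)) * P.coeff m = 0 := by
    intro m
    have h := ode_rec P _ _ _ h1 m
    push_cast at h ⊢
    linear_combination h
  have hP := coeff_formula n (M+1) l P hdP hrecP
  -- coefficient recurrence for R from (6)
  have hrecR : ∀ m : ℕ, ((m:ℂ)+1) * (2*(l-1) + (n:ℂ) - 4*((M:ℕ):ℂ) + 2*(m:ℂ) + 1) * R.coeff (m+1)
      + (2*(m:ℂ) - 2*((M:ℕ):ℂ) + 1) * ((m:ℂ) - ((M:ℕ):ℂ)) * R.coeff m = 0 := by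
    intro m
    have h := ode_rec R _ _ _ h6 m
    push_cast at h ⊢
    linear_combination h
  have hR := coeff_formula n M (l-1) R hdR hrecR
  -- coefficientwise form of (3)
  have hc3 : ∀ j : ℕ, -(2 * (P.coeff (j+1) * ((j:ℂ)+1))) + (l + (p:ℂ) - 2*(((M+1):ℕ):ℂ)) * R.coeff j = 0 := by
    intro j
    have hcj := congrArg (fun q => Polynomial.coeff q j) h3
    simpa only [coeff_add, coeff_neg, coeff_C_mul, coeff_derivative, coeff_zero] using hcj
  have hkey : (l + (p:ℂ) - 2*((M:ℂ)+1)) * R.coeff M = 2*((M:ℂ)+1) * P.coeff (M+1) := by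
    have h := hc3 M
    push_cast at h ⊢
    linear_combination h
  -- coefficientwise form of (2)
  have h2' : C 2 * derivative P + C (2*(((M+1):ℕ):ℂ)-1) * Q + C 2 * (X * derivative R)
      + C (l + (n:ℂ) - (p:ℂ) - 2*(((M+1):ℕ):ℂ) + 1) * R = C 2 * (X * derivative Q) := by
    linear_combination h2
  have hc2 : ∀ j : ℕ, 2 * (P.coeff (j+1) * ((j:ℂ)+1)) + (2*(((M+1):ℕ):ℂ)-1) * Q.coeff j
      + 2 * ((j:ℂ) * R.coeff j) + (l + (n:ℂ) - (p:ℂ) - 2*(((M+1):ℕ):ℂ) + 1) * R.coeff j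
      = 2 * ((j:ℂ) * Q.coeff j) := by
    intro j
    have hcj := congrArg (fun q => Polynomial.coeff q j) h2'
    match j with
    | 0 =>
      simp only [coeff_add, coeff_C_mul, mul_coeff_zero, coeff_X_zero, zero_mul, coeff_C_zero,
        coeff_derivative, Nat.cast_zero] at hcj ⊢
      push_cast at hcj ⊢
      linear_combination hcj
    | (k+1) =>
      simp only [coeff_add, coeff_C_mul, coeff_X_mul, coeff_derivative] at hcj
      push_cast at hcj ⊢
      linear_combination hcj
  -- coefficient formula for Q
  have hQ : ∀ i : ℕ, Q.coeff i
      = -(R.coeff M) * (2*l + (n:ℂ) - 2*(M:ℂ) - 3) * (if i ≤ M then bC n M i (l-1) else 0) := by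
    intro i
    have h0 := hc2 i
    rw [hP (i+1), hR i] at h0
    have hD : (2*(((M+1):ℕ):ℂ) - 1 - 2*(i:ℂ)) ≠ 0 := by
      have h := hodd M i
      intro hh
      apply h
      push_cast at hh ⊢
      linear_combination hh
    by_cases hi : i ≤ M
    · rw [if_pos hi]
      rw [if_pos (show i+1 ≤ M+1 by omega), if_pos hi] at h0
      have hA3 := aC_deriv n M i l hi
      have hA5 := bC_aC n M i (l-1) hi
      apply mul_left_cancel₀ hD
      push_cast at h0 hA3 hA5 ⊢
      linear_combination h0 - 2*(P.coeff (M+1))*hA3 + (aC n M i (l-1)) * hkey + (R.coeff M) * hA5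
    · rw [if_neg hi]
      rw [if_neg (by omega : ¬ (i+1 ≤ M+1)), if_neg hi] at h0
      apply mul_left_cancel₀ hD
      push_cast at h0 ⊢
      linear_combination h0
  -- the constant
  have h2M1 : (2*((M:ℂ)+1)) ≠ 0 := by
    intro h
    have h' : ((2*(M+1):ℕ):ℂ) = 0 := by push_cast; linear_combination h
    exact (Nat.cast_ne_zero.mpr (by omega)) h'
  refine ⟨R.coeff M / (2*((M:ℂ)+1)), ?_, ?_, ?_⟩
  · ext i
    rw [hP i, target_coeff]
    by_cases hi : i ≤ M + 1
    · rw [if_pos hi, if_pos (show i < M+1+1 by omega)]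
      have hcc : R.coeff M / (2*((M:ℂ)+1)) * (l + (p:ℂ) - 2*((M:ℂ)+1)) = P.coeff (M+1) := by
        apply mul_left_cancel₀ h2M1
        field_simp
        linear_combination hkey
      push_cast
      push_cast at hcc
      linear_combination (-(aC n (M+1) i l)) * hcc
    · rw [if_neg hi, if_neg (show ¬ i < M+1+1 by omega)]
      ring
  · ext i
    rw [hQ i, target_coeff]
    have hdm : R.coeff M / (2*((M:ℂ)+1)) * (2*((M:ℂ)+1)) = R.coeff M := div_mul_cancel₀ _ h2M1
    by_cases hi : i ≤ M
    · rw [if_pos hi, if_pos (show i < M+1 by omega)]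
      push_cast
      push_cast at hdm
      linear_combination ((2*l + (n:ℂ) - 2*(M:ℂ) - 3) * (bC n M i (l-1))) * hdm
    · rw [if_neg hi, if_neg (show ¬ i < M+1 by omega)]
      ring
  · ext i
    rw [hR i, target_coeff]
    have hdm : R.coeff M / (2*((M:ℂ)+1)) * (2*((M:ℂ)+1)) = R.coeff M := div_mul_cancel₀ _ h2M1
    by_cases hi : i ≤ M
    · rw [if_pos hi, if_pos (show i < M+1 by omega)]
      push_cast
      push_cast at hdm
      linear_combination (-(aC n M i (l-1))) * hdm
    · rw [if_neg hi, if_neg (show ¬ i < M+1 by omega)]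
      ring
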